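/- For every z ∈ ℝ^k, the Shannon entropy of the softmax distribution, H(t) = −Σ_{i=1}^k softmax(t·z)_i · log softmax(t·z)_i, is a nonincreasing function of t on [0, ∞). In particular, for every 0 < λ < 1, the entropy of softmax(λ·z) is at least the entropy of softmax(z): shrinking the logits increases the entropy of the output distribution. -/
import Mathlib


/-- Softmax: `softmax(z)_i = exp(z_i) / ∑_j exp(z_j)`. -/
noncomputable def softmax {k : ℕ} (z : Fin k → ℝ) : Fin k → ℝ :=
  fun i => Real.exp (z i) / ∑ j, Real.exp (z j)

/-- Shannon entropy of the softmax distribution of `z`: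
`H = −∑_i softmax(z)_i · log softmax(z)_i`. -/
noncomputable def softmaxEntropy {k : ℕ} (z : Fin k → ℝ) : ℝ :=
  -∑ i, softmax z i * Real.log (softmax z i)

section Aux

variable {k : ℕ} [Nonempty (Fin k)] (z : Fin k → ℝ)

/-- Partition function. -/
noncomputable def Spart (t : ℝ) : ℝ := ∑ j, Real.exp (t * z j)

/-- Mean of `z` under `softmax (t • z)`. -/
noncomputable def muPart (t : ℝ) : ℝ := (∑ j, z j * Real.exp (t * z j)) / Spart z t

lemma Spart_pos (t : ℝ) : 0 < Spart z t :=
  Finset.sum_pos (fun i _ => Real.exp_pos _) Finset.univ_nonempty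

lemma entropy_eq (t : ℝ) :
    softmaxEntropy (t • z) = Real.log (Spart z t) - t * muPart z t := by
  have hS := Spart_pos z t
  have hSne := hS.ne'
  unfold softmaxEntropy softmax Spart muPart
  simp only [Pi.smul_apply, smul_eq_mul]
  have hsum : (∑ j, Real.exp (t * z j)) = Spart z t := rfl
  rw [hsum]
  have h1 : ∀ i : Fin k,
      (Real.exp (t * z i) / Spart z t) * Real.log (Real.exp (t * z i) / Spart z t)
      = (t * z i) * (Real.exp (t * z i) / Spart z t)
        - Real.log (Spart z t) * (Real.exp (t * z i) / Spart z t) := by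
    intro i
    rw [Real.log_div (Real.exp_ne_zero _) hSne, Real.log_exp]
    ring
  rw [Finset.sum_congr rfl (fun i _ => h1 i)]
  rw [Finset.sum_sub_distrib]
  have h2 : (∑ i, Real.log (Spart z t) * (Real.exp (t * z i) / Spart z t))
      = Real.log (Spart z t) := by
    rw [← Finset.mul_sum]
    have : (∑ i, Real.exp (t * z i) / Spart z t) = 1 := by
      rw [← Finset.sum_div, hsum, div_self hSne]
    rw [this, mul_one]
  rw [h2]
  have h3 : (∑ i, (t * z i) * (Real.exp (t * z i) / Spart z t))
      = t * ((∑ j, z j * Real.exp (t * z j)) / Spart z t) := by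
    rw [← mul_div_assoc, Finset.mul_sum, Finset.sum_div]
    exact Finset.sum_congr rfl (fun i _ => by ring)
  rw [h3]
  unfold Spart
  ring

/-- Gibbs / Jensen inequality for the log-partition function. -/
lemma gibbs (s t : ℝ) :
    Real.log (Spart z t) + (s - t) * muPart z t ≤ Real.log (Spart z s) := by
  have hSt := Spart_pos z t
  have hSs := Spart_pos z s
  set w : Fin k → ℝ := fun i => Real.exp (t * z i) / Spart z t with hw
  set x : Fin k → ℝ := fun i => Real.exp ((s - t) * z i) with hx
  have hw0 : ∀ i ∈ Finset.univ, (0:ℝ) ≤ w i := fun i _ =>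
    le_of_lt (div_pos (Real.exp_pos _) hSt)
  have hw1 : ∑ i, w i = 1 := by
    simp only [hw]
    rw [← Finset.sum_div]
    have h : (∑ i, Real.exp (t * z i)) = Spart z t := rfl
    rw [h, div_self hSt.ne']
  have hmem : ∀ i ∈ Finset.univ, x i ∈ Set.Ioi (0:ℝ) := fun i _ => Real.exp_pos _
  have jensen := (strictConcaveOn_log_Ioi.concaveOn).le_map_sum hw0 hw1 hmem
  simp only [smul_eq_mul] at jensen
  have hwx : (∑ i, w i * x i) = Spart z s / Spart z t := by
    have hterm : ∀ i : Fin k, w i * x i * Spart z t = Real.exp (s * z i) := by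
      intro i
      simp only [hw, hx]
      rw [div_mul_eq_mul_div, div_mul_cancel₀ _ hSt.ne', ← Real.exp_add]
      congr 1; ring
    rw [eq_div_iff hSt.ne', Finset.sum_mul,
      Finset.sum_congr rfl (fun i _ => hterm i)]
    rfl
  have hwlog : (∑ i, w i * Real.log (x i)) = (s - t) * muPart z t := by
    simp only [hx, Real.log_exp]
    rw [muPart, ← mul_div_assoc, Finset.mul_sum, Finset.sum_div]
    apply Finset.sum_congr rfl
    intro i _
    simp only [hw]
    ring
  rw [hwx, Real.log_div hSs.ne' hSt.ne'] at jensen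
  rw [hwlog] at jensen
  linarith

lemma muPart_mono {s t : ℝ} (hst : s ≤ t) : muPart z s ≤ muPart z t := by
  rcases eq_or_lt_of_le hst with rfl | h
  · exact le_refl _
  · have g1 := gibbs z s t
    have g2 := gibbs z t s
    nlinarith

end Aux

/-- The entropy of `softmax(t·z)` is a nonincreasing function of `t` on `[0, ∞)`.
In particular, for every `0 < λ < 1`, shrinking the logits increases the
entropy of the output distribution:
`H(softmax(λ·z)) ≥ H(softmax(z))`. -/
theorem softmaxEntropy_antitone {k : ℕ} [Nonempty (Fin k)] (z : Fin k → ℝ) :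
    AntitoneOn (fun t : ℝ => softmaxEntropy (t • z)) (Set.Ici (0 : ℝ)) ∧
    ∀ lam : ℝ, 0 < lam → lam < 1 → softmaxEntropy z ≤ softmaxEntropy (lam • z) := by
  have hA : AntitoneOn (fun t : ℝ => softmaxEntropy (t • z)) (Set.Ici (0 : ℝ)) := by
    intro s hs t ht hst
    simp only
    rw [entropy_eq z s, entropy_eq z t]
    have g := gibbs z s t
    have hmu := muPart_mono z hst
    have hs0 : (0:ℝ) ≤ s := hs
    nlinarith [mul_nonneg hs0 (sub_nonneg.2 hmu)]
  refine ⟨hA, fun lam hl0 hl1 => ?_⟩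
  have := hA (Set.mem_Ici.2 hl0.le) (Set.mem_Ici.2 zero_le_one) hl1.le
  simpa [one_smul] using this
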